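/- If finite sets A_1,...,A_n with |A_i| = a_i realize a union of size a and a+1 ≤ a_1+...+a_n, with every intersection of k of the sets empty, then there exist finite sets A'_1,...,A'_n with |A'_i| = a_i, |A'_1 ∪ ... ∪ A'_n| = a+1, and every intersection of k of them empty. -/

import Mathlib

/-- If finite sets `A i` have every `k`-fold intersection empty and
`|⋃ A i| + 1 ≤ ∑ |A i|`, then there are finite sets `A' i` with `|A' i| = |A i|`,
`|⋃ A' i| = |⋃ A i| + 1`, and every `k`-fold intersection empty. -/
theorem stmt13 (n k : ℕ) (hn : 2 ≤ n) (hk : 2 ≤ k) (hkn : k ≤ n)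
    (A : Fin n → Set ℕ) (hfin : ∀ i, (A i).Finite)
    (hempty : ∀ s : Finset (Fin n), s.card = k → (⋂ i ∈ s, A i) = ∅)
    (hlt : (⋃ i, A i).ncard + 1 ≤ ∑ i, (A i).ncard) :
    ∃ A' : Fin n → Set ℕ, (∀ i, (A' i).Finite) ∧
      (∀ i, (A' i).ncard = (A i).ncard) ∧
      (⋃ i, A' i).ncard = (⋃ i, A i).ncard + 1 ∧
      (∀ s : Finset (Fin n), s.card = k → (⋂ i ∈ s, A' i) = ∅) := by
  classical
  have hUfin : (⋃ i, A i).Finite := Set.finite_iUnion hfin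
  -- find an element in two distinct sets
  have hex : ∃ i j x, i ≠ j ∧ x ∈ A i ∧ x ∈ A j := by
    by_contra h
    push_neg at h
    set B : Fin n → Finset ℕ := fun i => (hfin i).toFinset with hB
    have hcoe : (⋃ i, A i) = ↑(Finset.univ.biUnion B) := by
      ext x; simp [hB, Set.Finite.mem_toFinset]
    have hdisj : ∀ i ∈ Finset.univ, ∀ j ∈ Finset.univ, i ≠ j →
        Disjoint (B i) (B j) := by
      intro i _ j _ hij
      refine Finset.disjoint_left.2 fun x hxi hxj => ?_
      exact h i j x hij ((hfin i).mem_toFinset.1 hxi) ((hfin j).mem_toFinset.1 hxj)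
    have hcard : (⋃ i, A i).ncard = ∑ i, (A i).ncard := by
      rw [hcoe, Set.ncard_coe_finset, Finset.card_biUnion hdisj]
      refine Finset.sum_congr rfl fun i _ => ?_
      rw [← Set.ncard_coe_finset, (hfin i).coe_toFinset]
    omega
  obtain ⟨i, j, x, hij, hxi, hxj⟩ := hex
  -- fresh element
  obtain ⟨y, hy⟩ := (Set.Infinite.nonempty (hUfin.infinite_compl))
  have hyU : y ∉ ⋃ i, A i := hy
  set A' : Fin n → Set ℕ := fun m => if m = j then insert y (A j \ {x}) else A m with hA'
  have hA'j : A' j = insert y (A j \ {x}) := by simp [hA']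
  have hA'ne : ∀ m, m ≠ j → A' m = A m := fun m hm => by simp [hA', hm]
  have hfin' : ∀ m, (A' m).Finite := by
    intro m
    rcases eq_or_ne m j with hm | hm
    · rw [hm, hA'j]; exact ((hfin j).diff.insert y)
    · rw [hA'ne m hm]; exact hfin m
  have hyA : ∀ m, y ∉ A m := fun m hm => hyU (Set.mem_iUnion.2 ⟨m, hm⟩)
  refine ⟨A', hfin', ?_, ?_, ?_⟩
  · intro m
    rcases eq_or_ne m j with hm | hm
    · rw [hm, hA'j]
      rw [Set.ncard_insert_of_notMem (by simp [hyA j]) (hfin j).diff]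
      rw [Set.ncard_diff_singleton_add_one hxj (hfin j)]
    · rw [hA'ne m hm]
  · have hU : (⋃ m, A' m) = insert y (⋃ m, A m) := by
      apply Set.Subset.antisymm
      · intro z hz
        obtain ⟨m, hm⟩ := Set.mem_iUnion.1 hz
        rcases eq_or_ne m j with hmj | hmj
        · rw [hmj, hA'j] at hm
          rcases hm with rfl | hm
          · exact Set.mem_insert _ _
          · exact Set.mem_insert_of_mem _ (Set.mem_iUnion.2 ⟨j, hm.1⟩)
        · rw [hA'ne m hmj] at hm
          exact Set.mem_insert_of_mem _ (Set.mem_iUnion.2 ⟨m, hm⟩)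
      · intro z hz
        rcases hz with rfl | hz
        · exact Set.mem_iUnion.2 ⟨j, by rw [hA'j]; exact Set.mem_insert _ _⟩
        · obtain ⟨m, hm⟩ := Set.mem_iUnion.1 hz
          rcases eq_or_ne m j with hmj | hmj
          · rw [hmj] at hm
            rcases eq_or_ne z x with rfl | hzx
            · exact Set.mem_iUnion.2 ⟨i, by rw [hA'ne i hij]; exact hxi⟩
            · refine Set.mem_iUnion.2 ⟨j, ?_⟩
              rw [hA'j]
              exact Set.mem_insert_of_mem _ ⟨hm, hzx⟩
          · exact Set.mem_iUnion.2 ⟨m, by rw [hA'ne m hmj]; exact hm⟩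
    rw [hU, Set.ncard_insert_of_notMem hyU hUfin]
  · intro s hs
    rcases Finset.decidableMem j s with hjs | hjs
    · -- j ∉ s
      rw [← hempty s hs]
      apply Set.iInter₂_congr
      intro m hm
      exact hA'ne m (fun h => hjs (h ▸ hm))
    · -- j ∈ s
      have : ∃ i' ∈ s, i' ≠ j := by
        by_contra h
        push_neg at h
        have : s ⊆ {j} := fun m hm => Finset.mem_singleton.2 (h m hm)
        have := Finset.card_le_card this
        simp [hs] at this
        omega
      obtain ⟨i', hi's, hi'j⟩ := this
      ext z
      simp only [Set.mem_iInter, Set.mem_empty_iff_false, iff_false]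
      intro hz
      have hzj := hz j hjs
      rw [hA'j] at hzj
      have hzi' := hz i' hi's
      rw [hA'ne i' hi'j] at hzi'
      rcases hzj with rfl | hzj
      · exact hyA i' hzi'
      · have : z ∈ ⋂ m ∈ s, A m := by
          refine Set.mem_iInter₂.2 fun m hm => ?_
          rcases eq_or_ne m j with rfl | hmj
          · exact hzj.1
          · have := hz m hm; rwa [hA'ne m hmj] at this
        rw [hempty s hs] at this
        exact this
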